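/- The product representation ψ(q) = f_2^2 / f_1 holds, i.e., in ℤ[[q]] one has ψ(q)·f_1 = f_2^2, where ψ(q) = ∑_{n≥0} q^{n(n+1)/2} and f_m = ∏_{n≥1}(1 - q^{mn}). -/

import Mathlib

open PowerSeries
open scoped Classical

/-- `f m = ∏_{n ≥ 1} (1 - q^{m n})` in `ℤ[[q]]`, defined coefficientwise via the
stabilizing partial products (factors with `k > n` do not affect the coefficient of `q^n`). -/
noncomputable def f (m : ℕ) : PowerSeries ℤ :=
  PowerSeries.mk fun n =>
    PowerSeries.coeff (R := ℤ) n (∏ k ∈ Finset.Icc 1 n, (1 - (PowerSeries.X : PowerSeries ℤ) ^ (m * k)))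

/-- Ramanujan's theta function `φ(q) = ∑_{n ∈ ℤ} q^{n^2} = 1 + 2 ∑_{n ≥ 1} q^{n^2}`. -/
noncomputable def phi : PowerSeries ℤ :=
  PowerSeries.mk fun n => if n = 0 then 1 else if IsSquare n then 2 else 0

/-- Ramanujan's theta function `ψ(q) = ∑_{n ≥ 0} q^{n(n+1)/2}`. -/
noncomputable def psi : PowerSeries ℤ :=
  PowerSeries.mk fun n => if ∃ k, k * (k + 1) = 2 * n then 1 else 0

/-- Substitution `q ↦ q^j` on formal power series. -/
noncomputable def substPow (j : ℕ) (F : PowerSeries ℤ) : PowerSeries ℤ :=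
  PowerSeries.mk fun n => if j ∣ n then PowerSeries.coeff (R := ℤ) (n / j) F else 0

/-- `F(-q)`. -/
noncomputable def neg_q (F : PowerSeries ℤ) : PowerSeries ℤ :=
  PowerSeries.rescale (-1 : ℤ) F

/-- `bt n` : the number of overcubic partition triples of `n`, via the generating
function `∑ bt(n) q^n = f_4^3 / (f_1^6 f_2^3)`. -/
noncomputable def bt (n : ℕ) : ℤ :=
  PowerSeries.coeff (R := ℤ) n (f 4 ^ 3 * Ring.inverse (f 1) ^ 6 * Ring.inverse (f 2) ^ 3)


section AuxGauss

noncomputable def GB : ℕ → ℕ → PowerSeries ℤ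
  | _, 0 => 1
  | 0, _+1 => 0
  | (n+1), (k+1) => GB n (k+1) + X^(4*(n-k)) * GB n k

lemma GB_zero_right (n : ℕ) : GB n 0 = 1 := by cases n <;> rfl

lemma GB_recA (n k : ℕ) : GB (n+1) (k+1) = GB n (k+1) + X^(4*(n-k)) * GB n k := rfl

lemma GB_eq_zero : ∀ {n k : ℕ}, n < k → GB n k = 0
  | 0, _+1, _ => rfl
  | (n+1), (k+1), h => by
      rw [GB_recA, GB_eq_zero (by omega), GB_eq_zero (show n < k by omega)]
      ring

lemma GB_diag : ∀ n, GB n n = 1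
  | 0 => rfl
  | (n+1) => by
      rw [GB_recA, GB_eq_zero (by omega), GB_diag n]
      simp

lemma GB_absorb : ∀ (n k : ℕ), (1 - X^(4*(k+1))) * GB n (k+1) = (1 - X^(4*(n-k))) * GB n k
  | 0, k => by
      rw [GB_eq_zero (by omega)]
      cases k with
      | zero => simp [GB_zero_right]
      | succ k => rw [GB_eq_zero (by omega)]; ring
  | (n+1), 0 => by
      have h := GB_absorb n 0
      rw [GB_zero_right] at h ⊢
      simp only [Nat.sub_zero] at h ⊢
      rw [GB_recA, GB_zero_right]
      have hp : (X:PowerSeries ℤ)^(4*n) * X^(4*(0+1)) = X^(4*(n+1)) := by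
        rw [← pow_add, ← Nat.mul_add]
      have e0 : n - 0 = n := by omega
      rw [e0]
      calc (1 - X^(4*(0+1))) * (GB n 1 + X^(4*n) * 1)
          = (1 - X^(4*(0+1))) * GB n 1 + X^(4*n) * 1 - X^(4*n) * X^(4*(0+1)) := by ring
        _ = (1 - X^(4*n)) * 1 + X^(4*n) * 1 - X^(4*(n+1)) := by rw [h, hp]
        _ = (1 - X^(4*(n+1))) * 1 := by ring
  | (n+1), (k+1) => by
      rcases le_or_gt (k+1) n with hk | hk
      · have e1 : n + 1 - (k+1) = n - k := by omega
        have habs1 := GB_absorb n (k+1)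
        have habs0 := GB_absorb n k
        have hp2 : (X:PowerSeries ℤ)^(4*(n-(k+1))) * X^(4*(k+2)) = X^(4*(n+1)) := by
          rw [← pow_add, ← Nat.mul_add]
          congr 2
          omega
        have hp3 : (X:PowerSeries ℤ)^(4*(n-k)) * X^(4*(k+1)) = X^(4*(n+1)) := by
          rw [← pow_add, ← Nat.mul_add]
          congr 2
          omega
        rw [GB_recA, GB_recA, e1]
        calc (1 - X^(4*(k+1+1))) * (GB n (k+1+1) + X^(4*(n-(k+1))) * GB n (k+1))
            = (1 - X^(4*(k+1+1))) * GB n (k+1+1) + X^(4*(n-(k+1))) * ((1 - X^(4*(k+1+1))) * GB n (k+1)) := by ring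
          _ = (1 - X^(4*(n-(k+1)))) * GB n (k+1) + X^(4*(n-(k+1))) * ((1 - X^(4*(k+2))) * GB n (k+1)) := by rw [habs1]
          _ = (1 - X^(4*(n-(k+1))) * X^(4*(k+2))) * GB n (k+1) := by ring
          _ = (1 - X^(4*(n+1))) * GB n (k+1) := by rw [hp2]
          _ = (1 - X^(4*(n-k)) * X^(4*(k+1))) * GB n (k+1) := by rw [hp3]
          _ = (1 - X^(4*(n-k))) * GB n (k+1) + X^(4*(n-k)) * ((1 - X^(4*(k+1))) * GB n (k+1)) := by ring
          _ = (1 - X^(4*(n-k))) * GB n (k+1) + X^(4*(n-k)) * ((1 - X^(4*(n-k))) * GB n k) := by rw [habs0]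
          _ = (1 - X^(4*(n-k))) * (GB n (k+1) + X^(4*(n-k)) * GB n k) := by ring
      · rw [GB_eq_zero (show n+1 < k+1+1 by omega)]
        rcases Nat.lt_or_ge n k with h2 | h2
        · rw [GB_eq_zero (show n+1 < k+1 by omega)]; ring
        · have hnk : n = k := by omega
          subst hnk
          rw [GB_diag]
          have e : n + 1 - (n+1) = 0 := by omega
          rw [e]
          simp

lemma GB_recB (n k : ℕ) : GB (n+1) (k+1) = X^(4*(k+1)) * GB n (k+1) + GB n k := by
  have h := GB_absorb n k
  rw [GB_recA]
  have : (1:PowerSeries ℤ) * GB n (k+1) - X^(4*(k+1)) * GB n (k+1)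
       = 1 * GB n k - X^(4*(n-k)) * GB n k := by
    calc (1:PowerSeries ℤ) * GB n (k+1) - X^(4*(k+1)) * GB n (k+1)
        = (1 - X^(4*(k+1))) * GB n (k+1) := by ring
      _ = (1 - X^(4*(n-k))) * GB n k := h
      _ = 1 * GB n k - X^(4*(n-k)) * GB n k := by ring
  have h2 : GB n (k+1) + X^(4*(n-k)) * GB n k
      = X^(4*(k+1)) * GB n (k+1) + GB n k := by linear_combination this
  exact h2


lemma GB_one (n : ℕ) : GB (n+1) 1 = GB n 1 + X^(4*n) := by
  rw [GB_recA, GB_zero_right]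
  have : n - 0 = n := by omega
  rw [this, mul_one]

lemma GB_geom : ∀ n : ℕ, GB n 1 * (1 - X^4) = 1 - X^(4*n)
  | 0 => by rw [GB_eq_zero (by omega)]; simp
  | (n+1) => by
      rw [GB_one]
      have h := GB_geom n
      have hp : (X:PowerSeries ℤ)^(4*n) * X^4 = X^(4*(n+1)) := by
        have e : 4*(n+1) = 4*n+4 := by omega
        rw [e, pow_add]
      calc (GB n 1 + X^(4*n)) * (1 - X^4)
          = GB n 1 * (1-X^4) + X^(4*n) - X^(4*n)*X^4 := by ring
        _ = 1 - X^(4*n) + X^(4*n) - X^(4*(n+1)) := by rw [h, hp]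
        _ = 1 - X^(4*(n+1)) := by ring

lemma GB_star (N k : ℕ) : GB (2*N+2) (k+2)
    = (1 + X^(8*N+4)) * GB (2*N) (k+1) + X^(4*(k+2)) * GB (2*N) (k+2)
      + X^(4*(2*N-k)) * GB (2*N) k := by
  rcases le_or_gt k (2*N) with hk | hk
  · have h1 : GB (2*N+2) (k+2) = GB (2*N+1) (k+2) + X^(4*(2*N-k)) * GB (2*N+1) (k+1) := by
      have := GB_recA (2*N+1) (k+1)
      have e : 2*N+1-(k+1) = 2*N-k := by omega
      rwa [e] at this
    have h2 : GB (2*N+1) (k+2) = X^(4*(k+2)) * GB (2*N) (k+2) + GB (2*N) (k+1) := GB_recB (2*N) (k+1)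
    have h3 : GB (2*N+1) (k+1) = GB (2*N) (k+1) + X^(4*(2*N-k)) * GB (2*N) k := by
      have := GB_recA (2*N) k
      rwa [] at this
    have habs := GB_absorb (2*N) k
    have hp : (X:PowerSeries ℤ)^(4*(2*N-k)) * X^(4*(k+1)) = X^(8*N+4) := by
      rw [← pow_add]; congr 1; omega
    rw [h1, h2, h3]
    have hpp : (X:PowerSeries ℤ)^(4*(2*N-k)) * X^(4*(2*N-k)) = X^(4*(2*N-k)) * X^(4*(2*N-k)) := rfl
    -- goal is now algebra given habs and hp
    linear_combination (X:PowerSeries ℤ)^(4*(2*N-k)) * habs + GB (2*N) (k+1) * hp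
  · rw [GB_eq_zero (show 2*N+2 < k+2 by omega), GB_eq_zero (show 2*N < k+1 by omega),
        GB_eq_zero (show 2*N < k+2 by omega), GB_eq_zero (show 2*N < k by omega)]
    ring

/-- exponent 2j^2+j for j = m - N (as an integer) -/
def Ee (N m : ℕ) : ℕ := if N ≤ m then (m-N)*(2*(m-N)+1) else (N-m)*(2*(N-m)-1)

lemma Ee_succ_succ (N m : ℕ) : Ee (N+1) (m+1) = Ee N m := by
  unfold Ee
  have e1 : m + 1 - (N+1) = m - N := by omega
  have e2 : N + 1 - (m+1) = N - m := by omega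
  rw [e1, e2]
  by_cases h : N ≤ m
  · rw [if_pos h, if_pos (by omega)]
  · rw [if_neg h, if_neg (by omega)]

lemma Ee_L2 (N m : ℕ) : 4*m + Ee (N+1) m = Ee N m + 4*N + 1 := by
  unfold Ee
  rcases le_or_gt (N+1) m with h | h
  · obtain ⟨d, rfl⟩ : ∃ d, m = N + 1 + d := ⟨m - (N+1), by omega⟩
    rw [if_pos (by omega), if_pos (by omega)]
    have e1 : N + 1 + d - (N+1) = d := by omega
    have e2 : N + 1 + d - N = d + 1 := by omega
    rw [e1, e2]
    ring
  · rcases eq_or_lt_of_le (Nat.lt_succ_iff.mp h) with h2 | h2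
    · subst h2
      rw [if_neg (by omega), if_pos (by omega)]
      have e1 : m + 1 - m = 1 := by omega
      have e2 : m - m = 0 := by omega
      rw [e1, e2]
      ring
    · obtain ⟨d, rfl⟩ : ∃ d, N = m + 1 + d := ⟨N - (m+1), by omega⟩
      rw [if_neg (by omega), if_neg (by omega)]
      have e1 : m + 1 + d + 1 - m = d + 2 := by omega
      have e2 : m + 1 + d - m = d + 1 := by omega
      have e3 : 2*(d+2)-1 = 2*d+3 := by omega
      have e4 : 2*(d+1)-1 = 2*d+1 := by omega
      rw [e1, e2, e3, e4]
      ring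

lemma Ee_L3 (N k : ℕ) (hk : k ≤ 2*N) :
    4*(2*N-k) + Ee (N+1) (k+2) = Ee N k + 4*N + 3 := by
  unfold Ee
  rcases le_or_gt N k with h | h
  · obtain ⟨d, rfl⟩ : ∃ d, k = N + d := ⟨k - N, by omega⟩
    rw [if_pos (by omega), if_pos (by omega)]
    have e0 : 2*N - (N+d) = N - d := by omega
    have e1 : N + d + 2 - (N+1) = d + 1 := by omega
    have e2 : N + d - N = d := by omega
    rw [e0, e1, e2]
    obtain ⟨r, rfl⟩ : ∃ r, N = d + r := ⟨N - d, by omega⟩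
    have e3 : d + r - d = r := by omega
    rw [e3]
    ring
  · rcases le_or_gt N (k+1) with h2 | h2
    · have hNk : N = k + 1 := by omega
      subst hNk
      rw [if_pos (by omega), if_neg (by omega)]
      have e0 : 2*(k+1) - k = k + 2 := by omega
      have e1 : k + 2 - (k+1+1) = 0 := by omega
      have e2 : k + 1 - k = 1 := by omega
      have e3 : 2*1 - 1 = 1 := by omega
      rw [e0, e1, e2, e3]
      ring
    · obtain ⟨d, rfl⟩ : ∃ d, N = k + 2 + d := ⟨N - (k+2), by omega⟩
      rw [if_neg (by omega), if_neg (by omega)]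
      have e0 : 2*(k+2+d) - k = k + 4 + 2*d := by omega
      have e1 : k + 2 + d + 1 - (k + 2) = d + 1 := by omega
      have e2 : k + 2 + d - k = d + 2 := by omega
      have e3 : 2*(d+1)-1 = 2*d+1 := by omega
      have e4 : 2*(d+2)-1 = 2*d+3 := by omega
      rw [e0, e1, e2, e3, e4]
      ring

lemma Ee_self (N : ℕ) : Ee N N = 0 := by
  unfold Ee
  rw [if_pos (le_refl N)]
  simp

lemma Ee_zero (N : ℕ) : Ee (N+1) 0 = (N+1)*(2*N+1) := by
  unfold Ee
  rw [if_neg (by omega)]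
  have e : N + 1 - 0 = N + 1 := by omega
  have e2 : 2*(N+1)-1 = 2*N+1 := by omega
  rw [e, e2]

lemma Ee_one' (N : ℕ) : Ee (N+1) 1 = N*(2*N-1) := by
  unfold Ee
  rcases Nat.eq_zero_or_pos N with h | h
  · subst h; simp
  · rw [if_neg (by omega)]
    have e : N + 1 - 1 = N := by omega
    rw [e]

lemma Ee_zero_add (N : ℕ) : Ee N 0 + N = 2*N*N := by
  cases N with
  | zero => simp [Ee]
  | succ M => rw [Ee_zero]; ring

lemma Ee_one_add5 (N : ℕ) : Ee N 1 + N + (4*N+2) = 2*N*N + 5 := by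
  cases N with
  | zero => simp [Ee]
  | succ M =>
      rw [Ee_one']
      cases M with
      | zero => simp
      | succ L =>
          have e : 2*(L+1)-1 = 2*L+1 := by omega
          rw [e]; ring

noncomputable def SS (N : ℕ) : PowerSeries ℤ :=
  ∑ m ∈ Finset.range (2*N+1), GB (2*N) m * X^(Ee N m + N)

noncomputable def PP (N : ℕ) : PowerSeries ℤ :=
  ∏ k ∈ Finset.range N, ((1 + X^(4*k+3)) * (X + X^(4*k+2)))

lemma sum_peel2 (f : ℕ → PowerSeries ℤ) (n : ℕ) :
    ∑ m ∈ Finset.range (n+2), f m = (∑ k ∈ Finset.range n, f (k+2)) + f 1 + f 0 := by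
  rw [Finset.sum_range_succ' f (n+1), Finset.sum_range_succ' (fun i => f (i+1)) n]

lemma SS_step (N : ℕ) :
    SS (N+1) = SS N * (X + X^(4*N+2) + X^(4*N+4) + X^(8*N+5)) := by
  set G' : ℕ → PowerSeries ℤ := fun j => GB (2*N) j * X^(Ee N j + N) with hG'
  set F : ℕ → PowerSeries ℤ := fun m => GB (2*N+2) m * X^(Ee (N+1) m + (N+1)) with hF
  have hSS1 : SS (N+1) = ∑ m ∈ Finset.range (2*N+3), F m := by
    unfold SS
    have e1 : 2*(N+1) = 2*N+2 := by ring
    rw [e1]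
  have hpeel : ∑ m ∈ Finset.range (2*N+3), F m
      = (∑ k ∈ Finset.range (2*N+1), F (k+2)) + F 1 + F 0 := sum_peel2 F (2*N+1)
  have hsplit : ∀ k ∈ Finset.range (2*N+1),
      F (k+2) = (1+X^(8*N+4)) * (G' (k+1) * X) + G' (k+2) * X^(4*N+2) + G' k * X^(4*N+4) := by
    intro k hk
    have hkle : k ≤ 2*N := by
      simp only [Finset.mem_range] at hk; omega
    simp only [hF, hG']
    rw [GB_star N k]
    have p1 : (X:PowerSeries ℤ)^(Ee (N+1) (k+2) + (N+1)) = X^(Ee N (k+1)+N) * X := by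
      rw [show Ee (N+1) (k+2) = Ee N (k+1) from Ee_succ_succ N (k+1), ← add_assoc, pow_succ]
    have p2 : (X:PowerSeries ℤ)^(4*(k+2)) * X^(Ee (N+1) (k+2) + (N+1))
        = X^(Ee N (k+2)+N) * X^(4*N+2) := by
      rw [← pow_add, ← pow_add]
      congr 1
      have := Ee_L2 N (k+2)
      omega
    have p3 : (X:PowerSeries ℤ)^(4*(2*N-k)) * X^(Ee (N+1) (k+2) + (N+1))
        = X^(Ee N k+N) * X^(4*N+4) := by
      rw [← pow_add, ← pow_add]
      congr 1
      have := Ee_L3 N k hkle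
      omega
    calc ((1 + X^(8*N+4)) * GB (2*N) (k+1) + X^(4*(k+2)) * GB (2*N) (k+2)
          + X^(4*(2*N-k)) * GB (2*N) k) * X^(Ee (N+1) (k+2) + (N+1))
        = (1 + X^(8*N+4)) * GB (2*N) (k+1) * X^(Ee (N+1) (k+2) + (N+1))
          + GB (2*N) (k+2) * (X^(4*(k+2)) * X^(Ee (N+1) (k+2) + (N+1)))
          + GB (2*N) k * (X^(4*(2*N-k)) * X^(Ee (N+1) (k+2) + (N+1))) := by ring
      _ = (1 + X^(8*N+4)) * GB (2*N) (k+1) * (X^(Ee N (k+1)+N) * X)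
          + GB (2*N) (k+2) * (X^(Ee N (k+2)+N) * X^(4*N+2))
          + GB (2*N) k * (X^(Ee N k+N) * X^(4*N+4)) := by rw [p2, p3, p1]
      _ = (1+X^(8*N+4)) * (GB (2*N) (k+1) * X^(Ee N (k+1)+N) * X)
          + GB (2*N) (k+2) * X^(Ee N (k+2)+N) * X^(4*N+2)
          + GB (2*N) k * X^(Ee N k+N) * X^(4*N+4) := by ring
  have hsum : ∑ k ∈ Finset.range (2*N+1), F (k+2)
      = (1+X^(8*N+4)) * ((∑ k ∈ Finset.range (2*N+1), G' (k+1)) * X)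
        + (∑ k ∈ Finset.range (2*N+1), G' (k+2)) * X^(4*N+2)
        + SS N * X^(4*N+4) := by
    rw [Finset.sum_congr rfl hsplit]
    rw [Finset.sum_add_distrib, Finset.sum_add_distrib]
    congr 1
    · congr 1
      · rw [← Finset.mul_sum, ← Finset.sum_mul]
      · rw [← Finset.sum_mul]
    · rw [← Finset.sum_mul]
      rfl
  have hSSN : (∑ m ∈ Finset.range (2*N+1), G' m) = SS N := rfl
  have z1 : G' (2*N+1) = 0 := by
    simp only [hG']; rw [GB_eq_zero (by omega)]; ring
  have z2 : G' (2*N+1+1) = 0 := by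
    simp only [hG']; rw [GB_eq_zero (by omega)]; ring
  have hA : (∑ k ∈ Finset.range (2*N+1), G' (k+1)) + G' 0 = SS N := by
    rw [← Finset.sum_range_succ' G' (2*N+1), Finset.sum_range_succ, z1, add_zero, hSSN]
  have hB : ((∑ k ∈ Finset.range (2*N+1), G' (k+2)) + G' 1) + G' 0 = SS N := by
    have h3 := sum_peel2 G' (2*N+1)
    rw [Finset.sum_range_succ, Finset.sum_range_succ, z1, z2, add_zero, add_zero, hSSN] at h3
    exact h3.symm
  -- values
  have hG'0 : G' 0 = X^(2*N*N) := by
    simp only [hG']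
    rw [GB_zero_right, one_mul, Ee_zero_add]
  have hG'1 : G' 1 * X^(4*N+2) = GB (2*N) 1 * X^(2*N*N+5) := by
    simp only [hG']
    rw [mul_assoc, ← pow_add]
    congr 2
    exact Ee_one_add5 N
  have hF0 : F 0 = X^(2*N*N+4*N+2) := by
    simp only [hF]
    rw [GB_zero_right, one_mul]
    congr 1
    rw [Ee_zero]
    ring
  have hF1 : F 1 = GB (2*N+2) 1 * X^(2*N*N+1) := by
    simp only [hF]
    congr 2
    rw [Ee_one']
    cases N with
    | zero => simp
    | succ M =>
        have e : 2*(M+1)-1 = 2*M+1 := by omega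
        rw [e]; ring
  have hGB1 : GB (2*N+2) 1 = GB (2*N) 1 + X^(8*N) + X^(8*N+4) := by
    have h1 := GB_one (2*N+1)
    have h2 := GB_one (2*N)
    rw [h1, h2]
    have e1 : 4*(2*N+1) = 8*N+4 := by ring
    have e2 : 4*(2*N) = 8*N := by ring
    rw [e1, e2]
  have hgeom : GB (2*N) 1 * (1 - X^4) = 1 - X^(8*N) := by
    have := GB_geom (2*N)
    have e : 4*(2*N) = 8*N := by ring
    rwa [e] at this
  -- assemble
  rw [hSS1, hpeel, hsum, hF0, hF1, hGB1]
  have hA' : (∑ k ∈ Finset.range (2*N+1), G' (k+1)) = SS N - X^(2*N*N) := by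
    rw [← hA, hG'0]; ring
  have hB' : (∑ k ∈ Finset.range (2*N+1), G' (k+2)) = SS N - X^(2*N*N) - G' 1 := by
    rw [← hB, hG'0]; ring
  rw [hA', hB']
  have expand : (SS N - X^(2*N*N) - G' 1) * X^(4*N+2)
      = SS N * X^(4*N+2) - X^(2*N*N)*X^(4*N+2) - G' 1 * X^(4*N+2) := by ring
  rw [expand, hG'1]
  have e1 : (X:PowerSeries ℤ)^(2*N*N)*X^(4*N+2) = X^(2*N*N+4*N+2) := by
    rw [← pow_add, ← Nat.add_assoc]
  rw [e1]
  -- now pure algebra with hgeom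
  have key : (GB (2*N) 1 + X^(8*N) + X^(8*N+4)) * X^(2*N*N+1)
      - X^(2*N*N+1) - X^(2*N*N+1)*X^(8*N+4) - GB (2*N) 1 * X^(2*N*N+5) = 0 := by
    have h5 : (X:PowerSeries ℤ)^(2*N*N+5) = X^(2*N*N+1) * X^4 := by rw [← pow_add]
    have h8 : (X:PowerSeries ℤ)^(2*N*N+1) * X^(8*N) = X^(2*N*N+1) * X^(8*N) := rfl
    rw [h5]
    linear_combination X^(2*N*N+1) * hgeom
  linear_combination key

lemma SS_eq_PP : ∀ N, SS N = PP N
  | 0 => by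
      unfold SS PP
      rw [Finset.prod_range_zero, Finset.sum_range_one, GB_zero_right, Ee_self]
      simp
  | (N+1) => by
      have hP : PP (N+1) = PP N * ((1 + X^(4*N+3)) * (X + X^(4*N+2))) :=
        Finset.prod_range_succ _ N
      have hmul : ((1:PowerSeries ℤ) + X^(4*N+3)) * (X + X^(4*N+2))
          = X + X^(4*N+2) + X^(4*N+4) + X^(8*N+5) := by
        have e1 : (X:PowerSeries ℤ)^(4*N+3) * X = X^(4*N+4) := by
          rw [← pow_succ]
        have e2 : (X:PowerSeries ℤ)^(4*N+3) * X^(4*N+2) = X^(8*N+5) := by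
          rw [← pow_add]; congr 1; ring
        calc ((1:PowerSeries ℤ) + X^(4*N+3)) * (X + X^(4*N+2))
            = X + X^(4*N+2) + X^(4*N+3)*X + X^(4*N+3)*X^(4*N+2) := by ring
          _ = X + X^(4*N+2) + X^(4*N+4) + X^(8*N+5) := by rw [e1, e2]
      rw [SS_step N, hP, hmul, SS_eq_PP N]


-- range-based products
noncomputable def Pm (m M : ℕ) : PowerSeries ℤ := ∏ j ∈ Finset.range M, (1 - X^(m*(j+1)))
noncomputable def Plus (M : ℕ) : PowerSeries ℤ := ∏ j ∈ Finset.range M, (1 + X^(j+1))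
noncomputable def OddP (M : ℕ) : PowerSeries ℤ := ∏ j ∈ Finset.range M, (1 + X^(2*j+1))
noncomputable def EvP (M : ℕ) : PowerSeries ℤ := ∏ j ∈ Finset.range M, (1 + X^(2*j+2))
noncomputable def DD (M : ℕ) : PowerSeries ℤ := ∏ j ∈ Finset.range M, (1 - X^(4*(j+1)))

-- congruence helpers
lemma MXmul {c : ℕ} {A A' B B' : PowerSeries ℤ} (h1 : (X:PowerSeries ℤ)^c ∣ A - A')
    (h2 : (X:PowerSeries ℤ)^c ∣ B - B') : (X:PowerSeries ℤ)^c ∣ A*B - A'*B' := by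
  have : A*B - A'*B' = (A - A')*B + A'*(B - B') := by ring
  rw [this]
  exact dvd_add (h1.mul_right _) (h2.mul_left _)

lemma MXtrans {c : ℕ} {A B C : PowerSeries ℤ} (h1 : (X:PowerSeries ℤ)^c ∣ A - B)
    (h2 : (X:PowerSeries ℤ)^c ∣ B - C) : (X:PowerSeries ℤ)^c ∣ A - C := by
  have : A - C = (A - B) + (B - C) := by ring
  rw [this]
  exact dvd_add h1 h2

lemma prod_sub_one_dvd {c : ℕ} (s : Finset ℕ) (g : ℕ → PowerSeries ℤ)
    (h : ∀ k ∈ s, (X:PowerSeries ℤ)^c ∣ g k - 1) :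
    (X:PowerSeries ℤ)^c ∣ (∏ k ∈ s, g k) - 1 := by
  induction s using Finset.cons_induction with
  | empty => simp
  | cons a s ha ih =>
      rw [Finset.prod_cons]
      have h1 : (X:PowerSeries ℤ)^c ∣ g a - 1 := h a (Finset.mem_cons_self a s)
      have h2 := ih (fun k hk => h k (Finset.mem_cons_of_mem hk))
      have : g a * ∏ k ∈ s, g k - 1 = (g a - 1) * (∏ k ∈ s, g k) + ((∏ k ∈ s, g k) - 1) := by ring
      rw [this]
      exact dvd_add (h1.mul_right _) h2

-- truncation of partial products
lemma Pm_trunc {m : ℕ} (hm : 1 ≤ m) {M M' : ℕ} (h : M ≤ M') (c : ℕ) (hc : c ≤ m*M+1) :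
    (X:PowerSeries ℤ)^c ∣ Pm m M' - Pm m M := by
  unfold Pm
  rw [← Finset.prod_range_mul_prod_Ico _ h]
  have : (∏ j ∈ Finset.range M, (1 - X^(m*(j+1)))) * (∏ j ∈ Finset.Ico M M', (1 - (X:PowerSeries ℤ)^(m*(j+1))))
      - ∏ j ∈ Finset.range M, (1 - X^(m*(j+1)))
      = ((∏ j ∈ Finset.Ico M M', (1 - (X:PowerSeries ℤ)^(m*(j+1)))) - 1) * ∏ j ∈ Finset.range M, (1 - X^(m*(j+1))) := by
    ring
  rw [this]
  refine dvd_mul_of_dvd_left (prod_sub_one_dvd _ _ ?_) _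
  intro k hk
  have hkM : M ≤ k := (Finset.mem_Ico.mp hk).1
  have h2 : (1:PowerSeries ℤ) - X^(m*(k+1)) - 1 = -(X^(m*(k+1))) := by ring
  rw [h2, dvd_neg]
  apply pow_dvd_pow
  calc c ≤ m*M+1 := hc
    _ ≤ m*(k+1) := by nlinarith

lemma coeff_f_eq {m : ℕ} (hm : 1 ≤ m) (n M : ℕ) (h : n ≤ M) :
    coeff (R := ℤ) n (f m) = coeff (R := ℤ) n (Pm m M) := by
  have hIcc : ∀ L, (∏ k ∈ Finset.Icc 1 L, (1 - (X:PowerSeries ℤ)^(m*k))) = Pm m L := by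
    intro L
    unfold Pm
    rw [show Finset.Icc 1 L = Finset.Ico 1 (L+1) by rw [Finset.Ico_add_one_right_eq_Icc],
        Finset.prod_Ico_eq_prod_range]
    simp only [Nat.add_sub_cancel]
    apply Finset.prod_congr rfl
    intro j _
    rw [Nat.add_comm 1 j]
  have h1 : coeff (R := ℤ) n (f m) = coeff (R := ℤ) n (Pm m n) := by
    unfold f
    rw [coeff_mk, hIcc]
  rw [h1]
  have hdvd : (X:PowerSeries ℤ)^(n+1) ∣ Pm m M - Pm m n := Pm_trunc hm h (n+1) (by nlinarith)
  rw [X_pow_dvd_iff] at hdvd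
  have := hdvd n (by omega)
  rw [map_sub, sub_eq_zero] at this
  exact this.symm

lemma f_trunc {m : ℕ} (hm : 1 ≤ m) (n M : ℕ) (h : n ≤ M) :
    (X:PowerSeries ℤ)^(n+1) ∣ f m - Pm m M := by
  rw [X_pow_dvd_iff]
  intro i hi
  rw [map_sub, sub_eq_zero]
  exact coeff_f_eq hm i M (by omega)

-- pairing lemmas
lemma pair_prod (h : ℕ → PowerSeries ℤ) : ∀ K, ∏ j ∈ Finset.range (2*K), h j
    = ∏ i ∈ Finset.range K, (h (2*i) * h (2*i+1))
  | 0 => by simp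
  | (K+1) => by
      have e : 2*(K+1) = (2*K+1)+1 := by ring
      rw [e, Finset.prod_range_succ, Finset.prod_range_succ, pair_prod h K,
          Finset.prod_range_succ]
      ring

lemma Plus_split (K : ℕ) : Plus (2*K) = OddP K * EvP K := by
  unfold Plus OddP EvP
  rw [pair_prod _ K, ← Finset.prod_mul_distrib]

lemma EvP_mul_P2 (K : ℕ) : EvP K * Pm 2 K = DD K := by
  unfold EvP Pm DD
  rw [← Finset.prod_mul_distrib]
  apply Finset.prod_congr rfl
  intro i _
  have e1 : 2*i+2 = 2*(i+1) := by ring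
  have e2 : (X:PowerSeries ℤ)^(4*(i+1)) = (X^(2*(i+1)))^2 := by
    rw [← pow_mul]; congr 1; ring
  rw [e1, e2]
  ring

lemma P1_mul_Plus (M : ℕ) : Pm 1 M * Plus M = Pm 2 M := by
  unfold Pm Plus
  rw [← Finset.prod_mul_distrib]
  apply Finset.prod_congr rfl
  intro i _
  have e2 : (X:PowerSeries ℤ)^(2*(i+1)) = (X^(1*(i+1)))^2 := by
    rw [← pow_mul]; congr 1; ring
  rw [e2]
  ring


lemma MXsymm {c : ℕ} {A B : PowerSeries ℤ} (h : (X:PowerSeries ℤ)^c ∣ A - B) :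
    (X:PowerSeries ℤ)^c ∣ B - A := by
  have : B - A = -(A - B) := by ring
  rw [this, dvd_neg]
  exact h

lemma MXrefl {c : ℕ} (A : PowerSeries ℤ) : (X:PowerSeries ℤ)^c ∣ A - A := by simp

lemma DD_succ (j : ℕ) : DD (j+1) = DD j * (1 - X^(4*(j+1))) := Finset.prod_range_succ _ _

lemma GBD : ∀ n k, k ≤ n → GB n k * DD k * DD (n-k) = DD n
  | 0, 0, _ => by simp [GB_zero_right, DD]
  | 0, (k+1), h => by omega
  | (n+1), 0, _ => by
      rw [GB_zero_right, Nat.sub_zero]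
      simp [DD]
  | (n+1), (k+1), h => by
      rcases eq_or_lt_of_le h with heq | hlt
      · rw [heq, GB_diag]
        have e : n + 1 - (n+1) = 0 := by omega
        rw [e]
        simp [DD]
      · have hk : k + 1 ≤ n := by omega
        have IH1 := GBD n (k+1) hk
        have IH2 := GBD n k (by omega)
        have e1 : n + 1 - (k+1) = n - k := by omega
        have e2 : n - k = (n - (k+1)) + 1 := by omega
        have hDnk : DD (n-k) = DD (n-(k+1)) * (1 - X^(4*(n-k))) := by
          have ep : n - (k+1) + 1 = n - k := by omega
          rw [e2, DD_succ, ep]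
        have hDk : DD (k+1) = DD k * (1 - X^(4*(k+1))) := DD_succ k
        have hDn : DD (n+1) = DD n * (1 - X^(4*(n+1))) := DD_succ n
        have hp : (X:PowerSeries ℤ)^(4*(n-k)) * X^(4*(k+1)) = X^(4*(n+1)) := by
          rw [← pow_add]
          congr 1
          omega
        rw [GB_recA, e1, hDnk, hDk, hDn]
        calc (GB n (k+1) + X^(4*(n-k)) * GB n k) * (DD k * (1 - X^(4*(k+1))))
              * (DD (n-(k+1)) * (1 - X^(4*(n-k))))
            = (GB n (k+1) * (DD k * (1 - X^(4*(k+1)))) * DD (n-(k+1))) * (1 - X^(4*(n-k)))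
              + X^(4*(n-k)) * (1 - X^(4*(k+1))) * (GB n k * DD k * (DD (n-(k+1)) * (1 - X^(4*(n-k))))) := by
              ring
          _ = DD n * (1 - X^(4*(n-k)))
              + X^(4*(n-k)) * (1 - X^(4*(k+1))) * DD n := by
              rw [← hDk, ← hDnk, IH1]
              rw [show GB n k * DD k * DD (n - k) = DD n from IH2]
          _ = DD n * (1 - X^(4*(n-k)) * X^(4*(k+1))) := by ring
          _ = DD n * (1 - X^(4*(n+1))) := by rw [hp]

lemma DD_const (k : ℕ) : constantCoeff (R := ℤ) (DD k) = 1 := by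
  unfold DD
  rw [map_prod]
  apply Finset.prod_eq_one
  intro j _
  rw [map_sub, map_one, map_pow, constantCoeff_X]
  have h40 : 4*(j+1) ≠ 0 := by omega
  rw [zero_pow h40]
  ring

lemma DD_ne (k : ℕ) : DD k ≠ 0 := by
  intro h
  have := DD_const k
  rw [h, map_zero] at this
  exact zero_ne_one this

lemma GD_one (n k : ℕ) (hk : k ≤ n) :
    (X:PowerSeries ℤ)^(4*(min k (n-k))+4) ∣ GB n k * DD n - 1 := by
  set R1 := ∏ j ∈ Finset.Ico k n, (1 - (X:PowerSeries ℤ)^(4*(j+1))) with hR1def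
  set R2 := ∏ j ∈ Finset.Ico (n-k) n, (1 - (X:PowerSeries ℤ)^(4*(j+1))) with hR2def
  have hDn1 : DD n = DD k * R1 := by
    unfold DD
    rw [← Finset.prod_range_mul_prod_Ico _ hk]
  have hDn2 : DD n = DD (n-k) * R2 := by
    unfold DD
    rw [← Finset.prod_range_mul_prod_Ico _ (show n-k ≤ n by omega)]
  have hGD : GB n k * DD (n-k) = R1 := by
    have h0 := GBD n k hk
    have : DD k * (GB n k * DD (n-k)) = DD k * R1 := by
      rw [← hDn1, ← h0]; ring
    exact mul_left_cancel₀ (DD_ne k) this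
  have hprod : GB n k * DD n = R1 * R2 := by
    rw [hDn2, ← mul_assoc, hGD]
  have hr1 : (X:PowerSeries ℤ)^(4*k+4) ∣ R1 - 1 := by
    apply prod_sub_one_dvd
    intro j hj
    have hjk : k ≤ j := (Finset.mem_Ico.mp hj).1
    have : (1:PowerSeries ℤ) - X^(4*(j+1)) - 1 = -(X^(4*(j+1))) := by ring
    rw [this, dvd_neg]
    exact pow_dvd_pow _ (by omega)
  have hr2 : (X:PowerSeries ℤ)^(4*(n-k)+4) ∣ R2 - 1 := by
    apply prod_sub_one_dvd
    intro j hj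
    have hjk : n-k ≤ j := (Finset.mem_Ico.mp hj).1
    have : (1:PowerSeries ℤ) - X^(4*(j+1)) - 1 = -(X^(4*(j+1))) := by ring
    rw [this, dvd_neg]
    exact pow_dvd_pow _ (by omega)
  have hr1' : (X:PowerSeries ℤ)^(4*(min k (n-k))+4) ∣ R1 - 1 :=
    dvd_trans (pow_dvd_pow _ (by omega)) hr1
  have hr2' : (X:PowerSeries ℤ)^(4*(min k (n-k))+4) ∣ R2 - 1 :=
    dvd_trans (pow_dvd_pow _ (by omega)) hr2
  rw [hprod]
  have : R1 * R2 - 1 = (R1 - 1) * R2 + (R2 - 1) := by ring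
  rw [this]
  exact dvd_add (hr1'.mul_right _) hr2'

noncomputable def psiT (M : ℕ) : PowerSeries ℤ :=
  ∑ k ∈ Finset.range M, (X:PowerSeries ℤ)^(k*(k+1)/2)

lemma psi_trunc (n : ℕ) : (X:PowerSeries ℤ)^(n+1) ∣ psi - psiT (2*n+1) := by
  rw [X_pow_dvd_iff]
  intro i hi
  rw [map_sub, sub_eq_zero]
  have hcoeffT : coeff (R := ℤ) i (psiT (2*n+1))
      = ∑ k ∈ Finset.range (2*n+1), if i = k*(k+1)/2 then (1:ℤ) else 0 := by
    unfold psiT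
    rw [map_sum]
    apply Finset.sum_congr rfl
    intro k _
    rw [coeff_X_pow]
  have hcoeffpsi : coeff (R := ℤ) i psi = if ∃ k, k * (k + 1) = 2 * i then (1:ℤ) else 0 := by
    unfold psi
    rw [coeff_mk]
  rw [hcoeffpsi, hcoeffT]
  by_cases hex : ∃ k, k * (k + 1) = 2 * i
  · obtain ⟨k0, hk0⟩ := hex
    rw [if_pos ⟨k0, hk0⟩]
    have hk0le : k0 ≤ k0 * (k0+1) := by nlinarith
    have hk0mem : k0 ∈ Finset.range (2*n+1) := by
      rw [Finset.mem_range]; omega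
    rw [Finset.sum_eq_single_of_mem k0 hk0mem]
    · rw [if_pos (by omega)]
    · intro b _ hbne
      rw [if_neg]
      intro hbi
      have hbev : 2 ∣ b*(b+1) := (Nat.even_mul_succ_self b).two_dvd
      have hb2 : b*(b+1)/2*2 = b*(b+1) := Nat.div_mul_cancel hbev
      have hbeq : b*(b+1) = k0*(k0+1) := by omega
      have : b = k0 := by nlinarith
      exact hbne this
  · rw [if_neg hex]
    symm
    apply Finset.sum_eq_zero
    intro b _
    rw [if_neg]
    intro hbi
    have hbev : 2 ∣ b*(b+1) := (Nat.even_mul_succ_self b).two_dvd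
    have hb2 : b*(b+1)/2*2 = b*(b+1) := Nat.div_mul_cancel hbev
    exact hex ⟨b, by omega⟩

lemma JTP (N : ℕ) : OddP (2*N) = ∑ m ∈ Finset.range (2*N+1), GB (2*N) m * X^(Ee N m) := by
  have h1 : SS N = X^N * (∑ m ∈ Finset.range (2*N+1), GB (2*N) m * X^(Ee N m)) := by
    unfold SS
    rw [Finset.mul_sum]
    apply Finset.sum_congr rfl
    intro m _
    rw [pow_add]
    ring
  have h2 : PP N = X^N * OddP (2*N) := by
    unfold PP
    have hfac : ∀ k, ((1:PowerSeries ℤ) + X^(4*k+3)) * (X + X^(4*k+2))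
        = X * ((1 + X^(2*(2*k)+1)) * (1 + X^(2*(2*k+1)+1))) := by
      intro k
      have e1 : 2*(2*k)+1 = 4*k+1 := by ring
      have e2 : 2*(2*k+1)+1 = 4*k+3 := by ring
      have e3 : (X:PowerSeries ℤ)^(4*k+2) = X^(4*k+1) * X := by
        rw [← pow_succ]
      rw [e1, e2, e3]
      ring
    calc ∏ k ∈ Finset.range N, ((1+X^(4*k+3))*(X+X^(4*k+2)))
        = ∏ k ∈ Finset.range N, (X * ((1 + X^(2*(2*k)+1)) * (1 + X^(2*(2*k+1)+1)))) :=
          Finset.prod_congr rfl (fun k _ => hfac k)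
      _ = (∏ _k ∈ Finset.range N, (X:PowerSeries ℤ))
            * ∏ k ∈ Finset.range N, ((1 + X^(2*(2*k)+1)) * (1 + X^(2*(2*k+1)+1))) :=
          Finset.prod_mul_distrib
      _ = X^N * OddP (2*N) := by
          rw [Finset.prod_const, Finset.card_range]
          unfold OddP
          rw [pair_prod (fun j => 1 + X^(2*j+1)) N]
  have h3 := SS_eq_PP N
  rw [h1, h2] at h3
  exact (mul_left_cancel₀ (pow_ne_zero N X_ne_zero) h3).symm

lemma sum_Ee (n : ℕ) : ∑ m ∈ Finset.range (2*n+1), (X:PowerSeries ℤ)^(Ee n m)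
    = psiT (2*n+1) := by
  unfold psiT
  apply Finset.sum_nbij' (fun m => if n ≤ m then 2*(m-n) else 2*(n-m)-1)
    (fun k => if 2 ∣ k then n + k/2 else n - (k+1)/2)
  · intro a ha
    simp only [Finset.mem_range] at *
    split_ifs <;> omega
  · intro a ha
    simp only [Finset.mem_range] at *
    split_ifs <;> omega
  · intro a ha
    simp only [Finset.mem_range] at *
    split_ifs <;> omega
  · intro a ha
    simp only [Finset.mem_range] at *
    split_ifs <;> omega
  · intro m hm
    simp only [Finset.mem_range] at hm
    congr 1
    unfold Ee
    rcases le_or_gt n m with h | h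
    · rw [if_pos h, if_pos h]
      obtain ⟨d, rfl⟩ : ∃ d, m = n + d := ⟨m - n, by omega⟩
      have e1 : n + d - n = d := by omega
      rw [e1]
      have e2 : 2*d*(2*d+1) = 2*(d*(2*d+1)) := by ring
      omega
    · rw [if_neg (by omega), if_neg (by omega)]
      obtain ⟨b, hb⟩ : ∃ b, n - m = b + 1 := ⟨n - m - 1, by omega⟩
      rw [hb]
      have e1 : 2*(b+1)-1 = 2*b+1 := by omega
      rw [e1]
      have e2 : (2*b+1)*((2*b+1)+1) = 2*((b+1)*(2*b+1)) := by ring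
      omega

lemma INEQ (n m : ℕ) (hm : m ≤ 2*n) : n+1 ≤ 4*(min m (2*n-m))+4 + Ee n m := by
  unfold Ee
  rcases le_or_gt n m with h | h
  · rw [if_pos h]
    obtain ⟨d, rfl⟩ : ∃ d, m = n + d := ⟨m - n, by omega⟩
    have hd : d ≤ n := by omega
    have e1 : 2*n - (n+d) = n - d := by omega
    have e2 : min (n+d) (n-d) = n - d := by omega
    have e3 : n + d - n = d := by omega
    rw [e1, e2, e3]
    obtain ⟨r, rfl⟩ : ∃ r, n = d + r := ⟨n - d, by omega⟩
    have e4 : d + r - d = r := by omega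
    rw [e4]
    nlinarith
  · rw [if_neg (by omega)]
    obtain ⟨b, hb⟩ : ∃ b, n - m = b + 1 := ⟨n - m - 1, by omega⟩
    have e2 : min m (2*n - m) = m := by omega
    rw [e2, hb]
    have e1 : 2*(b+1)-1 = 2*b+1 := by omega
    rw [e1]
    have hn : n = m + b + 1 := by omega
    nlinarith

lemma OD_cong (n : ℕ) : (X:PowerSeries ℤ)^(n+1) ∣ OddP (2*n) * DD (2*n) - psiT (2*n+1) := by
  rw [JTP n, Finset.sum_mul, ← sum_Ee n, ← Finset.sum_sub_distrib]
  apply Finset.dvd_sum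
  intro m hm
  have hm2 : m ≤ 2*n := by
    simp only [Finset.mem_range] at hm; omega
  have hGD := GD_one (2*n) m hm2
  have hre : GB (2*n) m * X^(Ee n m) * DD (2*n) - X^(Ee n m)
      = (GB (2*n) m * DD (2*n) - 1) * X^(Ee n m) := by ring
  rw [hre]
  have hd : (X:PowerSeries ℤ)^(4*(min m (2*n-m))+4) * X^(Ee n m)
      ∣ (GB (2*n) m * DD (2*n) - 1) * X^(Ee n m) := mul_dvd_mul hGD dvd_rfl
  refine dvd_trans ?_ hd
  rw [← pow_add]
  exact pow_dvd_pow _ (INEQ n m hm2)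


end AuxGauss

theorem stmt7 : psi * f 1 = f 2 ^ 2 := by
  ext n
  have h1 : (X:PowerSeries ℤ)^(n+1) ∣ f 1 - Pm 1 (4*n) := f_trunc (by norm_num) n (4*n) (by omega)
  have h2 : (X:PowerSeries ℤ)^(n+1) ∣ f 2 - Pm 2 (4*n) := f_trunc (by norm_num) n (4*n) (by omega)
  have hpsi := psi_trunc n
  have d1 : (X:PowerSeries ℤ)^(n+1) ∣ psi * f 1 - psiT (2*n+1) * Pm 1 (4*n) := MXmul hpsi h1
  have d2 : (X:PowerSeries ℤ)^(n+1) ∣ psiT (2*n+1) * Pm 1 (4*n)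
      - (OddP (2*n) * DD (2*n)) * Pm 1 (4*n) :=
    MXmul (MXsymm (OD_cong n)) (MXrefl _)
  have e3 : (OddP (2*n) * DD (2*n)) * Pm 1 (4*n) = (Plus (4*n) * Pm 2 (2*n)) * Pm 1 (4*n) := by
    rw [← EvP_mul_P2 (2*n), show (4*n) = 2*(2*n) by ring, Plus_split (2*n)]
    ring
  have d4 : (X:PowerSeries ℤ)^(n+1) ∣ (Plus (4*n) * Pm 2 (2*n)) * Pm 1 (4*n)
      - (Plus (4*n) * Pm 2 (4*n)) * Pm 1 (4*n) :=
    MXmul (MXmul (MXrefl _)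
      (MXsymm (Pm_trunc (by norm_num) (show 2*n ≤ 4*n by omega) (n+1) (by omega)))) (MXrefl _)
  have e5 : (Plus (4*n) * Pm 2 (4*n)) * Pm 1 (4*n) = Pm 2 (4*n) * Pm 2 (4*n) := by
    rw [← P1_mul_Plus (4*n)]
    ring
  have d6 : (X:PowerSeries ℤ)^(n+1) ∣ Pm 2 (4*n) * Pm 2 (4*n) - f 2 ^ 2 := by
    have h := MXmul (MXsymm h2) (MXsymm h2)
    rwa [show f 2 * f 2 = f 2 ^ 2 by ring] at h
  have d2' : (X:PowerSeries ℤ)^(n+1) ∣ psiT (2*n+1) * Pm 1 (4*n)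
      - (Plus (4*n) * Pm 2 (2*n)) * Pm 1 (4*n) := by rw [← e3]; exact d2
  have d5 : (X:PowerSeries ℤ)^(n+1) ∣ (Plus (4*n) * Pm 2 (2*n)) * Pm 1 (4*n)
      - Pm 2 (4*n) * Pm 2 (4*n) := by rw [← e5]; exact d4
  have hd := MXtrans d1 (MXtrans d2' (MXtrans d5 d6))
  rw [X_pow_dvd_iff] at hd
  have h := hd n (by omega)
  rw [map_sub, sub_eq_zero] at h
  exact h
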